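/- Let G be a graph and I ⊆ V(G) a c-inseparable set with |I| ≥ c + 1. Then the set A := { a ∈ V(G) : I ∪ {a} is c-inseparable } is c-inseparable, and A is the unique maximal c-inseparable set in G containing I. -/
import Mathlib


variable {V : Type*}

/-- `C` separates `x` and `y` in `G`: neither endpoint is in `C` and every walk
from `x` to `y` meets `C`. -/
def Separates (G : SimpleGraph V) (C : Set V) (x y : V) : Prop :=
  x ∉ C ∧ y ∉ C ∧ ∀ p : G.Walk x y, ∃ z ∈ C, z ∈ p.support

/-- `x` and `y` are `c`-inseparable in `G`: no clique of size at most `c` separates them. -/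
def CInsep (G : SimpleGraph V) (c : ℕ) (x y : V) : Prop :=
  ∀ C : Set V, G.IsClique C → C.ncard ≤ c → ¬ Separates G C x y

/-- A set is `c`-inseparable if all its pairs of vertices are. -/
def InsepSet (G : SimpleGraph V) (c : ℕ) (A : Set V) : Prop :=
  ∀ x ∈ A, ∀ y ∈ A, CInsep G c x y

/-- Maximal `c`-inseparable set. -/
def MaxInsepSet (G : SimpleGraph V) (c : ℕ) (A : Set V) : Prop :=
  InsepSet G c A ∧ ∀ B, A ⊆ B → InsepSet G c B → B = A

/-- `C` separates `x` and `y` within the induced subgraph `G[A]`. -/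
def SeparatesWithin (G : SimpleGraph V) (A C : Set V) (x y : V) : Prop :=
  x ∈ A \ C ∧ y ∈ A \ C ∧
    ∀ p : G.Walk x y, (∀ z ∈ p.support, z ∈ A) → ∃ z ∈ C, z ∈ p.support

/-- `G[A]` is a `c`-atom: it has no clique separator of size at most `c`. -/
def AtomWithin (G : SimpleGraph V) (c : ℕ) (A : Set V) : Prop :=
  ¬ ∃ C : Set V, C ⊆ A ∧ G.IsClique C ∧ C.ncard ≤ c ∧ ∃ x y, SeparatesWithin G A C x y

/-- `G[A]` is a maximal `c`-atom of `G`. -/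
def MaxAtom (G : SimpleGraph V) (c : ℕ) (A : Set V) : Prop :=
  AtomWithin G c A ∧ ∀ B, A ⊆ B → AtomWithin G c B → B = A

lemma cinsep_refl (G : SimpleGraph V) (c : ℕ) (x : V) : CInsep G c x x := by
  rintro C _ _ ⟨hx, _, hp⟩
  obtain ⟨z, hz, hzs⟩ := hp SimpleGraph.Walk.nil
  simp only [SimpleGraph.Walk.support_nil, List.mem_singleton] at hzs
  exact hx (hzs ▸ hz)

lemma cinsep_of_common (G : SimpleGraph V) (c : ℕ) {x y : V}
    (h : ∀ C : Set V, G.IsClique C → C.ncard ≤ c →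
      ∃ v, v ∉ C ∧ CInsep G c x v ∧ CInsep G c y v) : CInsep G c x y := by
  rintro C hC hcard ⟨hxC, hyC, hp⟩
  obtain ⟨v, hvC, hxv, hyv⟩ := h C hC hcard
  have h1 := hxv C hC hcard
  have h2 := hyv C hC hcard
  unfold Separates at h1 h2
  push_neg at h1 h2
  obtain ⟨p, hpav⟩ := h1 hxC hvC
  obtain ⟨q, hqav⟩ := h2 hyC hvC
  obtain ⟨z, hzC, hzs⟩ := hp (p.append q.reverse)
  rw [SimpleGraph.Walk.mem_support_append_iff] at hzs
  rcases hzs with hzs | hzs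
  · exact hpav z hzC hzs
  · rw [SimpleGraph.Walk.support_reverse, List.mem_reverse] at hzs
    exact hqav z hzC hzs

/-- If `I` is `c`-inseparable with `|I| ≥ c + 1`, then
`A = {a | I ∪ {a} is c-inseparable}` is the unique maximal `c`-inseparable set
containing `I`. -/
theorem stmt2 [Fintype V] (G : SimpleGraph V) (c : ℕ) (I : Set V)
    (hI : InsepSet G c I) (hcard : c + 1 ≤ I.ncard) :
    InsepSet G c {a : V | InsepSet G c (I ∪ {a})} ∧
    I ⊆ {a : V | InsepSet G c (I ∪ {a})} ∧
    MaxInsepSet G c {a : V | InsepSet G c (I ∪ {a})} ∧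
    ∀ B : Set V, MaxInsepSet G c B → I ⊆ B → B = {a : V | InsepSet G c (I ∪ {a})} := by
  set A : Set V := {a : V | InsepSet G c (I ∪ {a})} with hA
  have hfind : ∀ C : Set V, C.ncard ≤ c → ∃ v ∈ I, v ∉ C := by
    intro C hCc
    by_contra hcon
    push_neg at hcon
    have : I.ncard ≤ C.ncard := Set.ncard_le_ncard hcon (Set.toFinite C)
    omega
  have hAinsep : InsepSet G c A := by
    intro x hx y hy
    apply cinsep_of_common
    intro C hC hcard
    obtain ⟨v, hvI, hvC⟩ := hfind C hcard
    exact ⟨v, hvC, hx x (Or.inr rfl) v (Or.inl hvI), hy y (Or.inr rfl) v (Or.inl hvI)⟩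
  have hIA : I ⊆ A := by
    intro a ha
    have h1 : I ∪ {a} = I := by
      rw [Set.union_eq_self_of_subset_right (Set.singleton_subset_iff.mpr ha)]
    show InsepSet G c (I ∪ {a})
    rw [h1]; exact hI
  have hBsub : ∀ B : Set V, InsepSet G c B → I ⊆ B → B ⊆ A := by
    intro B hB hIB b hb
    intro x hx y hy
    rcases hx with hx | hx <;> rcases hy with hy | hy
    · exact hI x hx y hy
    · exact hB x (hIB hx) y (hy ▸ hb)
    · exact hB x (hx ▸ hb) y (hIB hy)
    · exact hx ▸ hy ▸ cinsep_refl G c y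
  have hMax : MaxInsepSet G c A := by
    refine ⟨hAinsep, fun B hAB hB => ?_⟩
    exact Set.Subset.antisymm (hBsub B hB (hIA.trans hAB)) hAB
  refine ⟨hAinsep, hIA, hMax, fun B hB hIB => ?_⟩
  exact hB.2 A (hBsub B hB.1 hIB) hAinsep ▸ rfl
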